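/- Finite Representation Theorem for sets of desirable gambles: a set of desirable gambles D ⊆ L(X^N) is exchangeable if and only if there exists a (necessarily unique) set D̃ ⊆ L(C_N) such that D = {f ∈ L(X^N) : Hy_N(f) ∈ D̃}. In that case D̃ = Hy_N(D), and D is coherent if and only if D̃ is coherent. -/
import Mathlib


namespace ExchPaper

/-- The lift of a permutation `σ` of `{1,…,N}` to gambles on `X^N`: `(σ^t f)(x) = f(σx)`. -/
def lift {X : Type*} (N : ℕ) (σ : Equiv.Perm (Fin N)) (f : (Fin N → X) → ℝ) :
    (Fin N → X) → ℝ :=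
  fun x => f (fun k => x (σ k))
/-- `I_N`: the linear span of `{f − σ^t f : f ∈ L(X^N), σ a permutation of {1,…,N}}`. -/
def IN (X : Type*) (N : ℕ) : Submodule ℝ ((Fin N → X) → ℝ) :=
  Submodule.span ℝ
    {g | ∃ (f : (Fin N → X) → ℝ) (σ : Equiv.Perm (Fin N)), g = f - lift N σ f}
/-- The count vector `T(x)` of a sequence `x ∈ X^N`: `T(x)_z = #{k : x_k = z}`. -/
def countVec {X : Type*} [Fintype X] [DecidableEq X] (N : ℕ) (x : Fin N → X) : X → ℕ :=
  fun z => (Finset.univ.filter (fun k => x k = z)).card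

/-- The set of count vectors `C_N = {m ∈ ℕ^X : Σ_z m_z = N}`. -/
def CNset (X : Type*) [Fintype X] (N : ℕ) : Set (X → ℕ) :=
  {m | ∑ z, m z = N}

lemma CNset_finite (X : Type*) [Fintype X] (N : ℕ) : (CNset X N).Finite := by
  apply Set.Finite.subset (Set.Finite.pi (fun _ : X => Set.finite_Iic N))
  intro m hm
  simp only [Set.mem_pi, Set.mem_univ, Set.mem_Iic, forall_true_left]
  intro z
  calc m z ≤ ∑ w, m w := Finset.single_le_sum (fun i _ => Nat.zero_le (m i)) (Finset.mem_univ z)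
  _ = N := hm

noncomputable instance (X : Type*) [Fintype X] (N : ℕ) : Fintype (CNset X N) :=
  (CNset_finite X N).fintype

/-- The permutation invariant atom `A_m = {x ∈ X^N : T(x) = m}`. -/
def atom {X : Type*} [Fintype X] [DecidableEq X] (N : ℕ) (m : X → ℕ) : Finset (Fin N → X) :=
  Finset.univ.filter (fun x => countVec N x = m)

/-- `Hy_N(f)(m) = (1/|A_m|) Σ_{y ∈ A_m} f(y)`. -/
noncomputable def Hy {X : Type*} [Fintype X] [DecidableEq X] (N : ℕ)
    (f : (Fin N → X) → ℝ) (m : X → ℕ) : ℝ :=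
  (1 / ((atom N m).card : ℝ)) * ∑ y ∈ atom N m, f y

/-- `Hy_N(f)` as a gamble on `C_N`. -/
noncomputable def HyFun {X : Type*} [Fintype X] [DecidableEq X] (N : ℕ)
    (f : (Fin N → X) → ℝ) : CNset X N → ℝ :=
  fun m => Hy N f m.1
/-- Coherence of a set of desirable gambles `D` on a possibility space `α`: `0 ∉ D`; every
nonzero nonnegative gamble belongs to `D`; `D` is closed under multiplication by positive
reals and under addition. -/
def CohDes {α : Type*} (D : Set (α → ℝ)) : Prop :=
  (0 : α → ℝ) ∉ D ∧
  (∀ f : α → ℝ, (∀ x, 0 ≤ f x) → f ≠ 0 → f ∈ D) ∧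
  (∀ f ∈ D, ∀ l : ℝ, 0 < l → l • f ∈ D) ∧
  (∀ f ∈ D, ∀ g ∈ D, f + g ∈ D)

section Helpers

variable {X : Type*} [Fintype X] [DecidableEq X] {N : ℕ}

lemma countVec_apply (x : Fin N → X) (z : X) :
    countVec N x z = ∑ k, if x k = z then 1 else 0 := by
  rw [countVec, Finset.card_filter]

lemma sum_countVec (x : Fin N → X) : ∑ z, countVec N x z = N := by
  have h := Finset.card_eq_sum_card_fiberwise
    (f := x) (s := Finset.univ) (t := Finset.univ) (fun a _ => Finset.mem_univ _)
  simpa [countVec, Finset.card_univ] using h.symm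

lemma countVec_comp (x : Fin N → X) (σ : Equiv.Perm (Fin N)) :
    countVec N (fun k => x (σ k)) = countVec N x := by
  funext z
  simp only [countVec_apply]
  exact Fintype.sum_equiv σ _ _ (fun k => rfl)

lemma countVec_succ (w : Fin (N + 1) → X) (z : X) :
    countVec (N + 1) w z = (if w 0 = z then 1 else 0) + countVec N (fun i => w i.succ) z := by
  rw [countVec_apply, countVec_apply, Fin.sum_univ_succ]

lemma mem_atom {x : Fin N → X} {m : X → ℕ} : x ∈ atom N m ↔ countVec N x = m := by
  simp [atom]

lemma exists_countVec : ∀ (N : ℕ) (m : X → ℕ), (∑ z, m z = N) →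
    ∃ x : Fin N → X, countVec N x = m := by
  intro N
  induction N with
  | zero =>
    intro m hm
    refine ⟨Fin.elim0, ?_⟩
    funext z
    have := (Finset.sum_eq_zero_iff.mp hm) z (Finset.mem_univ z)
    rw [this]
    simp [countVec]
  | succ n ih =>
    intro m hm
    have hz0 : ∃ z0, m z0 ≠ 0 := by
      by_contra h
      push_neg at h
      simp [h] at hm
    obtain ⟨z0, hz0⟩ := hz0
    set m' : X → ℕ := Function.update m z0 (m z0 - 1) with hm'def
    have hsum' : ∑ z, m' z = n := by
      have h1 : ∑ z, m' z = (m z0 - 1) + ∑ z ∈ Finset.univ.erase z0, m z := by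
        rw [hm'def, Finset.sum_update_of_mem (Finset.mem_univ z0), ← Finset.erase_eq]
      have h2 : m z0 + ∑ z ∈ Finset.univ.erase z0, m z = n + 1 := by
        rw [Finset.add_sum_erase _ _ (Finset.mem_univ z0)]; exact hm
      omega
    obtain ⟨x', hx'⟩ := ih m' hsum'
    refine ⟨Fin.cons z0 x', ?_⟩
    funext z
    rw [countVec_succ]
    simp only [Fin.cons_zero, Fin.cons_succ]
    rw [hx']
    by_cases h : z0 = z
    · subst h; simp [hm'def, Function.update_self]; omega
    · simp [hm'def, Function.update_of_ne (Ne.symm h), h]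

/-- Extend a permutation of `Fin N` to `Fin (N+1)` fixing `0`. -/
def extPerm (σ' : Equiv.Perm (Fin N)) : Equiv.Perm (Fin (N + 1)) where
  toFun := Fin.cons 0 (fun i => (σ' i).succ)
  invFun := Fin.cons 0 (fun i => (σ'.symm i).succ)
  left_inv := by
    intro k
    induction k using Fin.cases <;> simp
  right_inv := by
    intro k
    induction k using Fin.cases <;> simp

lemma exists_perm_of_countVec_eq : ∀ {N : ℕ} (x y : Fin N → X),
    countVec N x = countVec N y → ∃ σ : Equiv.Perm (Fin N), y = fun k => x (σ k) := by
  intro N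
  induction N with
  | zero =>
    intro x y _
    exact ⟨1, funext fun k => k.elim0⟩
  | succ n ih =>
    intro x y h
    have hy0 : 0 < countVec (n+1) y (y 0) := by
      rw [countVec]
      apply Finset.card_pos.mpr
      exact ⟨0, by simp⟩
    have hx0 : 0 < countVec (n+1) x (y 0) := by rw [h]; exact hy0
    rw [countVec] at hx0
    obtain ⟨j, hj⟩ := Finset.card_pos.mp hx0
    simp only [Finset.mem_filter, Finset.mem_univ, true_and] at hj
    set x₁ : Fin (n+1) → X := fun k => x (Equiv.swap 0 j k) with hx₁def
    have hcv₁ : countVec (n+1) x₁ = countVec (n+1) x := countVec_comp x _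
    have hx₁0 : x₁ 0 = y 0 := by simp [hx₁def, hj]
    have htail : countVec n (fun i => x₁ i.succ) = countVec n (fun i => y i.succ) := by
      funext z
      have h1 : countVec (n+1) x₁ z = countVec (n+1) y z := by rw [hcv₁, h]
      rw [countVec_succ, countVec_succ, hx₁0] at h1
      exact Nat.add_left_cancel h1
    obtain ⟨σ', hσ'⟩ := ih _ _ htail
    refine ⟨(extPerm σ').trans (Equiv.swap 0 j), ?_⟩
    funext k
    induction k using Fin.cases with
    | zero =>
      simp only [Equiv.trans_apply]
      show y 0 = x (Equiv.swap 0 j (extPerm σ' 0))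
      have : extPerm σ' 0 = 0 := by simp [extPerm]
      rw [this]
      simp [hj]
    | succ i =>
      simp only [Equiv.trans_apply]
      show y i.succ = x (Equiv.swap 0 j (extPerm σ' i.succ))
      have h2 : extPerm σ' i.succ = (σ' i).succ := by simp [extPerm]
      rw [h2]
      have := congrFun hσ' i
      simpa [hx₁def] using this

lemma atom_nonempty {m : X → ℕ} (hm : ∑ z, m z = N) : (atom N m).Nonempty := by
  obtain ⟨x, hx⟩ := exists_countVec N m hm
  exact ⟨x, mem_atom.mpr hx⟩

/-- `Hy` as a linear map. -/
noncomputable def HyL (X : Type*) [Fintype X] [DecidableEq X] (N : ℕ) :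
    ((Fin N → X) → ℝ) →ₗ[ℝ] (CNset X N → ℝ) where
  toFun := HyFun N
  map_add' f g := by
    funext m
    simp [HyFun, Hy, Finset.sum_add_distrib, mul_add]
  map_smul' c f := by
    funext m
    simp only [HyFun, Hy, Pi.smul_apply, smul_eq_mul, RingHom.id_apply]
    rw [show ∑ y ∈ atom N m.1, c * f y = c * ∑ y ∈ atom N m.1, f y from (Finset.mul_sum _ _ _).symm]
    ring

lemma sum_atom_comp (m : X → ℕ) (f : (Fin N → X) → ℝ) (σ : Equiv.Perm (Fin N)) :
    ∑ y ∈ atom N m, f (fun k => y (σ k)) = ∑ y ∈ atom N m, f y := by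
  apply Finset.sum_nbij' (i := fun y => fun k => y (σ k)) (j := fun y => fun k => y (σ.symm k))
  · intro a ha
    rw [mem_atom] at ha ⊢
    rw [countVec_comp]; exact ha
  · intro a ha
    rw [mem_atom] at ha ⊢
    rw [countVec_comp]; exact ha
  · intro a _; funext k; simp
  · intro a _; funext k; simp
  · intro a _; rfl

lemma Hy_lift (f : (Fin N → X) → ℝ) (σ : Equiv.Perm (Fin N)) (m : X → ℕ) :
    Hy N (lift N σ f) m = Hy N f m := by
  unfold Hy lift
  rw [sum_atom_comp]

lemma HyFun_IN {h : (Fin N → X) → ℝ} (hh : h ∈ IN X N) : HyFun N h = 0 := by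
  have hle : IN X N ≤ LinearMap.ker (HyL X N) := by
    rw [IN, Submodule.span_le]
    rintro g ⟨f, σ, rfl⟩
    simp only [SetLike.mem_coe, LinearMap.mem_ker, map_sub]
    have : HyFun N (lift N σ f) = HyFun N f := by
      funext m; exact Hy_lift f σ m.1
    show HyFun N f - HyFun N (lift N σ f) = 0
    rw [this]; simp
  exact LinearMap.mem_ker.mp (hle hh)


/-- Symmetrization of a gamble. -/
noncomputable def symN {X : Type*} (N : ℕ) (f : (Fin N → X) → ℝ) : (Fin N → X) → ℝ :=
  ((N.factorial : ℝ))⁻¹ • ∑ σ : Equiv.Perm (Fin N), lift N σ f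

lemma sub_symN_mem (f : (Fin N → X) → ℝ) : f - symN N f ∈ IN X N := by
  have hfact : (0 : ℝ) < N.factorial := by positivity
  have key : f - symN N f
      = ((N.factorial : ℝ))⁻¹ • ∑ σ : Equiv.Perm (Fin N), (f - lift N σ f) := by
    funext x
    simp only [Pi.sub_apply, symN, Pi.smul_apply, Finset.sum_apply, smul_eq_mul]
    rw [Finset.sum_sub_distrib, Finset.sum_const, Finset.card_univ, Fintype.card_perm,
      Fintype.card_fin, nsmul_eq_mul, mul_sub, ← mul_assoc,
      inv_mul_cancel₀ (ne_of_gt hfact), one_mul]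
  rw [key]
  refine Submodule.smul_mem _ _ (Submodule.sum_mem _ fun σ _ => ?_)
  exact Submodule.subset_span ⟨f, σ, rfl⟩

lemma symN_comp (f : (Fin N → X) → ℝ) (x : Fin N → X) (σ0 : Equiv.Perm (Fin N)) :
    symN N f (fun k => x (σ0 k)) = symN N f x := by
  simp only [symN, Pi.smul_apply, Finset.sum_apply, smul_eq_mul]
  congr 1
  exact Fintype.sum_equiv (Equiv.mulLeft σ0) _ _ (fun σ => rfl)

lemma symN_const_on_atom (f : (Fin N → X) → ℝ) {x y : Fin N → X}
    (h : countVec N x = countVec N y) : symN N f x = symN N f y := by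
  obtain ⟨σ, hσ⟩ := exists_perm_of_countVec_eq x y h
  rw [hσ, symN_comp]

lemma Hy_const_on_atom {g : (Fin N → X) → ℝ} {m : X → ℕ} {x : Fin N → X}
    (hx : x ∈ atom N m) (hconst : ∀ y ∈ atom N m, g y = g x) :
    Hy N g m = g x := by
  have hcard : 0 < (atom N m).card := Finset.card_pos.mpr ⟨x, hx⟩
  rw [Hy, Finset.sum_congr rfl hconst, Finset.sum_const, nsmul_eq_mul]
  field_simp

lemma mem_IN_of_HyFun_eq_zero {f : (Fin N → X) → ℝ} (hf : HyFun N f = 0) :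
    f ∈ IN X N := by
  have h1 : f - symN N f ∈ IN X N := sub_symN_mem f
  have h2 : HyFun N (symN N f) = HyFun N f := by
    have h0 := HyFun_IN h1
    have h3 : HyFun N (f - symN N f) = HyFun N f - HyFun N (symN N f) :=
      map_sub (HyL X N) f (symN N f)
    rw [h0] at h3
    exact (sub_eq_zero.mp h3.symm).symm
  have hsym0 : symN N f = 0 := by
    funext x
    have hx : x ∈ atom N (countVec N x) := mem_atom.mpr rfl
    have hconst : ∀ y ∈ atom N (countVec N x), symN N f y = symN N f x := by
      intro y hy
      exact symN_const_on_atom f (by rw [mem_atom.mp hy])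
    have hval : Hy N (symN N f) (countVec N x) = symN N f x := Hy_const_on_atom hx hconst
    have h0 : HyFun N (symN N f) ⟨countVec N x, sum_countVec x⟩ = 0 := by
      rw [h2, hf]; rfl
    have : Hy N (symN N f) (countVec N x) = 0 := h0
    rw [hval] at this
    simpa using this
  have hfe : f = f - symN N f := by rw [hsym0]; funext x; simp
  rw [hfe]
  exact h1


/-- A canonical section of `HyFun`. -/
noncomputable def sec {X : Type*} [Fintype X] [DecidableEq X] {N : ℕ}
    (g : CNset X N → ℝ) : (Fin N → X) → ℝ :=
  fun x => g ⟨countVec N x, sum_countVec x⟩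

lemma HyFun_sec (g : CNset X N → ℝ) : HyFun N (sec g) = g := by
  funext m
  obtain ⟨m, hm⟩ := m
  obtain ⟨x, hx⟩ := atom_nonempty (N := N) (m := m) hm
  have hcv : countVec N x = m := mem_atom.mp hx
  have hconst : ∀ y ∈ atom N m, sec g y = sec g x := by
    intro y hy
    have he : (⟨countVec N y, sum_countVec y⟩ : CNset X N)
        = ⟨countVec N x, sum_countVec x⟩ := by
      apply Subtype.ext
      show countVec N y = countVec N x
      rw [mem_atom.mp hy, hcv]
    unfold sec
    rw [he]
  show Hy N (sec g) m = g ⟨m, hm⟩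
  rw [Hy_const_on_atom hx hconst]
  have he : (⟨countVec N x, sum_countVec x⟩ : CNset X N) = ⟨m, hm⟩ := Subtype.ext hcv
  unfold sec
  rw [he]

lemma HyFun_nonneg {f : (Fin N → X) → ℝ} (hf : ∀ x, 0 ≤ f x) (m : CNset X N) :
    0 ≤ HyFun N f m := by
  unfold HyFun Hy
  apply mul_nonneg
  · positivity
  · exact Finset.sum_nonneg fun y _ => hf y

lemma HyFun_ne_zero {f : (Fin N → X) → ℝ} (hf : ∀ x, 0 ≤ f x) (hne : f ≠ 0) :
    HyFun N f ≠ 0 := by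
  obtain ⟨x, hx⟩ : ∃ x, f x ≠ 0 := by
    by_contra h
    push_neg at h
    exact hne (funext h)
  have hxpos : 0 < f x := lt_of_le_of_ne (hf x) (Ne.symm hx)
  have hmem : x ∈ atom N (countVec N x) := mem_atom.mpr rfl
  have hcard : 0 < (atom N (countVec N x)).card := Finset.card_pos.mpr ⟨x, hmem⟩
  intro h0
  have h1 : HyFun N f ⟨countVec N x, sum_countVec x⟩ = 0 := by rw [h0]; rfl
  have h2 : 0 < Hy N f (countVec N x) := by
    unfold Hy
    apply mul_pos
    · positivity
    · exact lt_of_lt_of_le hxpos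
        (Finset.single_le_sum (fun y _ => hf y) hmem)
  rw [show Hy N f (countVec N x) = 0 from h1] at h2
  exact lt_irrefl 0 h2

lemma HyFun_add (f g : (Fin N → X) → ℝ) : HyFun N (f + g) = HyFun N f + HyFun N g :=
  map_add (HyL X N) f g

lemma HyFun_smul (c : ℝ) (f : (Fin N → X) → ℝ) : HyFun N (c • f) = c • HyFun N f :=
  map_smul (HyL X N) c f

lemma HyFun_zero : HyFun N (0 : (Fin N → X) → ℝ) = 0 := map_zero (HyL X N)

end Helpers

/-- Finite Representation, sets of desirable gambles: a set of desirable
gambles `D ⊆ L(X^N)` is exchangeable (i.e. `D + I_N ⊆ D`) iff there is a (necessarily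
unique) set `D̃ ⊆ L(C_N)` with `D = {f : Hy_N(f) ∈ D̃}`; in that case `D̃ = Hy_N(D)`,
and `D` is coherent iff `D̃` is coherent. -/
theorem statement_10 (X : Type*) [Fintype X] [DecidableEq X] [Nonempty X] (N : ℕ) (hN : 0 < N)
    (D : Set ((Fin N → X) → ℝ)) :
    ((∀ f ∈ D, ∀ h ∈ IN X N, f + h ∈ D) ↔
      ∃ Dt : Set (CNset X N → ℝ), D = {f | HyFun N f ∈ Dt}) ∧
    (∀ Dt Dt' : Set (CNset X N → ℝ),
        D = {f | HyFun N f ∈ Dt} → D = {f | HyFun N f ∈ Dt'} → Dt = Dt') ∧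
    (∀ Dt : Set (CNset X N → ℝ), D = {f | HyFun N f ∈ Dt} →
        Dt = HyFun N '' D ∧ (CohDes D ↔ CohDes Dt)) := by
  -- key: membership transfer
  have hsec_mem : ∀ (Dt : Set (CNset X N → ℝ)), D = {f | HyFun N f ∈ Dt} →
      ∀ g : CNset X N → ℝ, (g ∈ Dt ↔ sec g ∈ D) := by
    intro Dt hD g
    rw [hD]
    simp only [Set.mem_setOf_eq, HyFun_sec]
  refine ⟨⟨?_, ?_⟩, ?_, ?_⟩
  · -- exchangeable → representation
    intro hexch
    refine ⟨HyFun N '' D, ?_⟩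
    ext f
    simp only [Set.mem_setOf_eq, Set.mem_image]
    constructor
    · intro hf; exact ⟨f, hf, rfl⟩
    · rintro ⟨g, hg, hfg⟩
      have hker : HyFun N (f - g) = 0 := by
        have hsub : HyFun N (f - g) = HyFun N f - HyFun N g := map_sub (HyL X N) f g
        rw [hsub, hfg]; simp
      have hIN : f - g ∈ IN X N := mem_IN_of_HyFun_eq_zero hker
      have := hexch g hg (f - g) hIN
      simpa using this
  · -- representation → exchangeable
    rintro ⟨Dt, hD⟩ f hf h hh
    rw [hD] at hf ⊢
    simp only [Set.mem_setOf_eq] at hf ⊢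
    have : HyFun N (f + h) = HyFun N f := by
      rw [HyFun_add, HyFun_IN hh]; simp
    rw [this]
    exact hf
  · -- uniqueness
    intro Dt Dt' hD hD'
    ext g
    rw [hsec_mem Dt hD g, hsec_mem Dt' hD' g]
  · -- Dt = image, coherence transfer
    intro Dt hD
    have himg : Dt = HyFun N '' D := by
      ext g
      simp only [Set.mem_image]
      constructor
      · intro hg
        exact ⟨sec g, (hsec_mem Dt hD g).mp hg, HyFun_sec g⟩
      · rintro ⟨f, hf, rfl⟩
        rw [hD] at hf
        exact hf
    refine ⟨himg, ?_⟩
    have hmemD : ∀ f, f ∈ D ↔ HyFun N f ∈ Dt := by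
      intro f; rw [hD]; rfl
    constructor
    · rintro ⟨h0, hpos, hsmul, hadd⟩
      refine ⟨?_, ?_, ?_, ?_⟩
      · intro h0t
        exact h0 ((hmemD 0).mpr (by rwa [HyFun_zero]))
      · intro g hg hgne
        have h1 : sec g ∈ D := by
          apply hpos
          · intro x; exact hg _
          · intro hz
            apply hgne
            rw [← HyFun_sec g, hz, HyFun_zero]
        have := (hmemD (sec g)).mp h1
        rwa [HyFun_sec] at this
      · intro g hg l hl
        have h1 : sec g ∈ D := (hsec_mem Dt hD g).mp hg
        have h2 : l • sec g ∈ D := hsmul _ h1 l hl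
        have := (hmemD _).mp h2
        rwa [HyFun_smul, HyFun_sec] at this
      · intro g hg g' hg'
        have h2 : sec g + sec g' ∈ D :=
          hadd _ ((hsec_mem Dt hD g).mp hg) _ ((hsec_mem Dt hD g').mp hg')
        have := (hmemD _).mp h2
        rwa [HyFun_add, HyFun_sec, HyFun_sec] at this
    · rintro ⟨h0, hpos, hsmul, hadd⟩
      refine ⟨?_, ?_, ?_, ?_⟩
      · intro hD0
        exact h0 (by rw [← HyFun_zero (X := X) (N := N)]; exact (hmemD 0).mp hD0)
      · intro f hf hfne
        apply (hmemD f).mpr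
        exact hpos _ (HyFun_nonneg hf) (HyFun_ne_zero hf hfne)
      · intro f hf l hl
        apply (hmemD _).mpr
        rw [HyFun_smul]
        exact hsmul _ ((hmemD f).mp hf) l hl
      · intro f hf g hg
        apply (hmemD _).mpr
        rw [HyFun_add]
        exact hadd _ ((hmemD f).mp hf) _ ((hmemD g).mp hg)


end ExchPaper
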